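/- Let A be n×n, B n×m, E n×d, Q symmetric positive semidefinite, R symmetric positive definite, α ∈ (0,1), λ > 0, w̄ ∈ ℝ^d, and sample covariance matrix Σ̂ (d×d, symmetric positive semidefinite). Define the value-iteration sequences P_0 = 0, g_0 = 0, z_0 = 0 and, with blocks H_xx^i = Q + αAᵀP_iA, H_xu^i = αAᵀP_iB, H_xw^i = αAᵀP_iE, H_uu^i = R + αBᵀP_iB, H_uw^i = αBᵀP_iE, H_ww^i = αEᵀP_iE − λI, G_x^i = αAᵀg_i, G_u^i = αBᵀg_i, G_w^i = αEᵀg_i + 2λw̄: P_{i+1} = H_xx^i − [H_xu^i H_xw^i][[H_uu^i, H_uw^i],[H_uw^iᵀ, H_ww^i]]⁻¹[H_xu^iᵀ; H_xw^iᵀ], g_{i+1} = G_x^i − [H_xu^i H_xw^i][[H_uu^i, H_uw^i],[H_uw^iᵀ, H_ww^i]]⁻¹[G_u^i; G_w^i], z_{i+1} = αz_i − λ‖w̄‖² − tr(H_ww^{i,−1}(λ²Σ̂ + ¼G_w^iG_w^{iᵀ})) − ¼(G_u^i − H_uw^iH_ww^{i,−1}G_w^i)ᵀ(H_uu^i − H_uw^iH_ww^{i,−1}H_uw^{iᵀ})⁻¹(G_u^i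 − H_uw^iH_ww^{i,−1}G_w^i). Also define the Q-learning sequences H_0 = 0, G_0 = 0, s_0 = 0, K_0 = 0, r_0 = 0, L_0 = 0, l_0 = 0, and for i ≥ 0: H_{i+1} = blockdiag(Q,R,−λI) + α(T_i S)ᵀ H_i (T_i S), (G_{i+1})ᵀ = α(G_iᵀ + 2b_iᵀH_i)T_i S + [0, 0, 2λw̄ᵀ], s_{i+1} = α(s_i + G_iᵀb_i + b_iᵀH_ib_i) − λ‖w̄‖², where S = [A B E], T_i = [I; K_i; L_i], b_i = [0; r_i; l_i], and for i ≥ 1 the policies (K_i, r_i) and (L_i, l_i) are computed from the blocks of (H_i, G_i) by K_i = (H_uu − H_uwH_ww⁻¹H_uwᵀ)⁻¹(H_uwH_ww⁻¹H_xwᵀ − H_xuᵀ), r_i = −½(H_uu − H_uwH_ww⁻¹H_uwᵀ)⁻¹(G_u − H_uwH_ww⁻¹G_w), L_i = (H_ww − H_uwᵀH_uu⁻¹H_uw)⁻¹(H_uwᵀH_uu⁻¹H_xuᵀ − H_xwᵀ), l_i = −½(H_ww − H_uwᵀH_uu⁻¹H_uw)⁻¹(G_w − H_uwᵀH_uu⁻¹G_u).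 Assume λI − αEᵀP_iE is positive definite for every i. Then for every i ≥ 1, with Σ̂ = 0 in the z-recursion: H_i equals the block matrix [[Q+αAᵀP_{i−1}A, αAᵀP_{i−1}B, αAᵀP_{i−1}E],[∗, R+αBᵀP_{i−1}B, αBᵀP_{i−1}E],[∗, ∗, αEᵀP_{i−1}E−λI]], G_iᵀ = [αg_{i−1}ᵀA, αg_{i−1}ᵀB, αg_{i−1}ᵀE + 2λw̄ᵀ], and s_i = αz_{i−1} − λ‖w̄‖². -/

import Mathlib

open Matrix

set_option linter.unusedSectionVars false
set_option maxHeartbeats 2000000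

section Helpers
variable {m d n : Type*} [Fintype m] [Fintype d] [Fintype n]
variable [DecidableEq m] [DecidableEq d]

lemma herm_iff_transpose (M : Matrix n n ℝ) : M.IsHermitian ↔ Mᵀ = M := by
  unfold Matrix.IsHermitian
  constructor <;> intro h <;> ext i j <;>
    simpa using congrFun (congrFun h i) j

lemma psd_smul {M : Matrix n n ℝ} (hM : M.PosSemidef) {c : ℝ} (hc : 0 ≤ c) :
    (c • M).PosSemidef := by
  obtain ⟨h1, h2⟩ := posSemidef_iff_dotProduct_mulVec.mp hM
  refine posSemidef_iff_dotProduct_mulVec.mpr ⟨?_, fun x => ?_⟩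
  · rw [herm_iff_transpose] at h1 ⊢
    rw [transpose_smul, h1]
  · rw [smul_mulVec, dotProduct_smul, smul_eq_mul]
    exact mul_nonneg hc (h2 x)

lemma psd_quad {M : Matrix n n ℝ} (hM : M.PosSemidef) (x : n → ℝ) :
    0 ≤ x ⬝ᵥ (M *ᵥ x) := by simpa using hM.dotProduct_mulVec_nonneg x

lemma pd_quad {M : Matrix n n ℝ} (hM : M.PosDef) (x : n → ℝ) :
    0 ≤ x ⬝ᵥ (M *ᵥ x) := psd_quad hM.posSemidef x

lemma neg_inv_mat (N : Matrix d d ℝ) : (-N)⁻¹ = -(N⁻¹) := by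
  by_cases h : IsUnit N.det
  · apply inv_eq_right_inv
    rw [Matrix.neg_mul, Matrix.mul_neg, neg_neg, mul_nonsing_inv _ h]
  · rw [nonsing_inv_apply_not_isUnit _ h, nonsing_inv_apply_not_isUnit, neg_zero]
    rwa [det_neg, isUnit_iff_ne_zero, mul_ne_zero_iff, ← isUnit_iff_ne_zero (a := N.det),
      and_iff_right] at *
    simp
end Helpers

section BlockAlg
variable {m d n : Type*} [Fintype m] [Fintype d] [Fintype n]
variable [DecidableEq m] [DecidableEq d]
variable (Huu : Matrix m m ℝ) (Huw : Matrix m d ℝ) (Hww : Matrix d d ℝ)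

/-- explicit inverse of the 2x2 block matrix via the ₂₂ Schur complement -/
lemma blockInv (hu : IsUnit Huu.det) (hw : IsUnit Hww.det)
    (hdu : IsUnit (Huu - Huw * Hww⁻¹ * Huwᵀ).det) :
    (fromBlocks Huu Huw Huwᵀ Hww)⁻¹ =
      fromBlocks (Huu - Huw * Hww⁻¹ * Huwᵀ)⁻¹
        (-((Huu - Huw * Hww⁻¹ * Huwᵀ)⁻¹ * Huw * Hww⁻¹))
        (-(Hww⁻¹ * Huwᵀ * (Huu - Huw * Hww⁻¹ * Huwᵀ)⁻¹))
        (Hww⁻¹ + Hww⁻¹ * Huwᵀ * (Huu - Huw * Hww⁻¹ * Huwᵀ)⁻¹ * Huw * Hww⁻¹) := by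
  letI iw : Invertible Hww := Matrix.invertibleOfIsUnitDet _ hw
  have hw' : ⅟Hww = Hww⁻¹ := invOf_eq_nonsing_inv Hww
  letI idu : Invertible (Huu - Huw * ⅟Hww * Huwᵀ) := by
    rw [hw']; exact Matrix.invertibleOfIsUnitDet _ hdu
  letI iM : Invertible (fromBlocks Huu Huw Huwᵀ Hww) :=
    fromBlocks₂₂Invertible Huu Huw Huwᵀ Hww
  have := invOf_fromBlocks₂₂_eq Huu Huw Huwᵀ Hww
  rw [invOf_eq_nonsing_inv] at this
  rw [this]
  simp only [invOf_eq_nonsing_inv]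
end BlockAlg

section Ident
variable {m d : Type*} [Fintype m] [Fintype d] [DecidableEq m] [DecidableEq d]
variable (Huu : Matrix m m ℝ) (Huw : Matrix m d ℝ) (Hww : Matrix d d ℝ)

lemma key0 (hu : IsUnit Huu.det) (hw : IsUnit Hww.det) :
    (Hww - Huwᵀ * Huu⁻¹ * Huw) * (Hww⁻¹ * Huwᵀ) =
      Huwᵀ * Huu⁻¹ * (Huu - Huw * Hww⁻¹ * Huwᵀ) := by
  simp only [Matrix.sub_mul, Matrix.mul_sub, Matrix.mul_assoc,
    Matrix.mul_nonsing_inv_cancel_left _ _ hw, Matrix.nonsing_inv_mul_cancel_left _ _ hu,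
    Matrix.nonsing_inv_mul _ hu, Matrix.mul_one]

lemma identI2 (hu : IsUnit Huu.det) (hw : IsUnit Hww.det)
    (hdu : IsUnit (Huu - Huw * Hww⁻¹ * Huwᵀ).det)
    (hdw : IsUnit (Hww - Huwᵀ * Huu⁻¹ * Huw).det) :
    Hww⁻¹ * Huwᵀ * (Huu - Huw * Hww⁻¹ * Huwᵀ)⁻¹ =
      (Hww - Huwᵀ * Huu⁻¹ * Huw)⁻¹ * (Huwᵀ * Huu⁻¹) := by
  have h := congrArg (fun X => (Hww - Huwᵀ * Huu⁻¹ * Huw)⁻¹ * (X * (Huu - Huw * Hww⁻¹ * Huwᵀ)⁻¹))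
    (key0 Huu Huw Hww hu hw)
  simpa only [Matrix.mul_assoc, Matrix.nonsing_inv_mul_cancel_left _ _ hdw,
    Matrix.mul_nonsing_inv_cancel_right _ _ hdu,
    Matrix.mul_nonsing_inv _ hdu, Matrix.mul_one, ← Matrix.mul_assoc] using h

lemma identI4 (hu : IsUnit Huu.det) (hw : IsUnit Hww.det)
    (hdu : IsUnit (Huu - Huw * Hww⁻¹ * Huwᵀ).det)
    (hdw : IsUnit (Hww - Huwᵀ * Huu⁻¹ * Huw).det) :
    Hww⁻¹ + Hww⁻¹ * Huwᵀ * (Huu - Huw * Hww⁻¹ * Huwᵀ)⁻¹ * Huw * Hww⁻¹ =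
      (Hww - Huwᵀ * Huu⁻¹ * Huw)⁻¹ := by
  have h2 := identI2 Huu Huw Hww hu hw hdu hdw
  -- multiply claim by Δw on the left
  have key : (Hww - Huwᵀ * Huu⁻¹ * Huw) *
      (Hww⁻¹ + Hww⁻¹ * Huwᵀ * (Huu - Huw * Hww⁻¹ * Huwᵀ)⁻¹ * Huw * Hww⁻¹) = 1 := by
    rw [Matrix.mul_add]
    have e1 : (Hww - Huwᵀ * Huu⁻¹ * Huw) * Hww⁻¹ = 1 - Huwᵀ * Huu⁻¹ * Huw * Hww⁻¹ := by
      rw [Matrix.sub_mul, Matrix.mul_nonsing_inv _ hw]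
    have e2 : (Hww - Huwᵀ * Huu⁻¹ * Huw) *
        (Hww⁻¹ * Huwᵀ * (Huu - Huw * Hww⁻¹ * Huwᵀ)⁻¹ * Huw * Hww⁻¹) =
        Huwᵀ * Huu⁻¹ * Huw * Hww⁻¹ := by
      calc (Hww - Huwᵀ * Huu⁻¹ * Huw) *
          (Hww⁻¹ * Huwᵀ * (Huu - Huw * Hww⁻¹ * Huwᵀ)⁻¹ * Huw * Hww⁻¹)
          = ((Hww - Huwᵀ * Huu⁻¹ * Huw) * (Hww⁻¹ * Huwᵀ)) *
            ((Huu - Huw * Hww⁻¹ * Huwᵀ)⁻¹ * (Huw * Hww⁻¹)) := by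
            simp only [Matrix.mul_assoc]
        _ = Huwᵀ * Huu⁻¹ * ((Huu - Huw * Hww⁻¹ * Huwᵀ) *
            ((Huu - Huw * Hww⁻¹ * Huwᵀ)⁻¹ * (Huw * Hww⁻¹))) := by
            rw [key0 Huu Huw Hww hu hw]; simp only [Matrix.mul_assoc]
        _ = Huwᵀ * Huu⁻¹ * Huw * Hww⁻¹ := by
            rw [Matrix.mul_nonsing_inv_cancel_left _ _ hdu]; simp only [Matrix.mul_assoc]
    rw [e1, e2]
    abel
  calc Hww⁻¹ + Hww⁻¹ * Huwᵀ * (Huu - Huw * Hww⁻¹ * Huwᵀ)⁻¹ * Huw * Hww⁻¹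
      = (Hww - Huwᵀ * Huu⁻¹ * Huw)⁻¹ * ((Hww - Huwᵀ * Huu⁻¹ * Huw) *
        (Hww⁻¹ + Hww⁻¹ * Huwᵀ * (Huu - Huw * Hww⁻¹ * Huwᵀ)⁻¹ * Huw * Hww⁻¹)) := by
        rw [← Matrix.mul_assoc, Matrix.nonsing_inv_mul _ hdw, Matrix.one_mul]
    _ = (Hww - Huwᵀ * Huu⁻¹ * Huw)⁻¹ := by rw [key, Matrix.mul_one]
end Ident

section Combined
variable {m d n : Type*} [Fintype m] [Fintype d] [Fintype n]
variable [DecidableEq m] [DecidableEq d]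
variable (Huu : Matrix m m ℝ) (Huw : Matrix m d ℝ) (Hww : Matrix d d ℝ)
variable (Hxu : Matrix n m ℝ) (Hxw : Matrix n d ℝ) (Gu : m → ℝ) (Gw : d → ℝ)

/-- the optimal policy matrices solve `U = -(M⁻¹ Fᵀ)` -/
lemma Ulemma (hu : IsUnit Huu.det) (hw : IsUnit Hww.det)
    (hdu : IsUnit (Huu - Huw * Hww⁻¹ * Huwᵀ).det)
    (hdw : IsUnit (Hww - Huwᵀ * Huu⁻¹ * Huw).det) :
    fromRows ((Huu - Huw * Hww⁻¹ * Huwᵀ)⁻¹ * (Huw * Hww⁻¹ * Hxwᵀ - Hxuᵀ))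
      ((Hww - Huwᵀ * Huu⁻¹ * Huw)⁻¹ * (Huwᵀ * Huu⁻¹ * Hxuᵀ - Hxwᵀ)) =
    -((fromBlocks Huu Huw Huwᵀ Hww)⁻¹ * (fromCols Hxu Hxw)ᵀ) := by
  rw [transpose_fromCols, blockInv Huu Huw Hww hu hw hdu,
    fromBlocks_mul_fromRows]
  rw [show -(fromRows ((Huu - Huw * Hww⁻¹ * Huwᵀ)⁻¹ * Hxuᵀ +
      -((Huu - Huw * Hww⁻¹ * Huwᵀ)⁻¹ * Huw * Hww⁻¹) * Hxwᵀ)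
      (-(Hww⁻¹ * Huwᵀ * (Huu - Huw * Hww⁻¹ * Huwᵀ)⁻¹) * Hxuᵀ +
        (Hww⁻¹ + Hww⁻¹ * Huwᵀ * (Huu - Huw * Hww⁻¹ * Huwᵀ)⁻¹ * Huw * Hww⁻¹) * Hxwᵀ)) = _
      from rfl, fromRows_neg]
  rw [fromRows_ext_iff]
  constructor
  · rw [Matrix.mul_sub]
    simp only [Matrix.neg_mul, Matrix.mul_assoc]
    abel
  · rw [identI4 Huu Huw Hww hu hw hdu hdw, identI2 Huu Huw Hww hu hw hdu hdw,
      Matrix.mul_sub]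
    simp only [Matrix.neg_mul, Matrix.mul_assoc]
    abel

/-- the optimal offsets solve `v = -(1/2) M⁻¹ h` -/
lemma vlemma (hu : IsUnit Huu.det) (hw : IsUnit Hww.det)
    (hdu : IsUnit (Huu - Huw * Hww⁻¹ * Huwᵀ).det)
    (hdw : IsUnit (Hww - Huwᵀ * Huu⁻¹ * Huw).det) :
    Sum.elim
      ((-(1:ℝ) / 2) • ((Huu - Huw * Hww⁻¹ * Huwᵀ)⁻¹ *ᵥ (Gu - (Huw * Hww⁻¹) *ᵥ Gw)))
      ((-(1:ℝ) / 2) • ((Hww - Huwᵀ * Huu⁻¹ * Huw)⁻¹ *ᵥ (Gw - (Huwᵀ * Huu⁻¹) *ᵥ Gu))) =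
    (-(1:ℝ) / 2) • ((fromBlocks Huu Huw Huwᵀ Hww)⁻¹ *ᵥ Sum.elim Gu Gw) := by
  rw [blockInv Huu Huw Hww hu hw hdu, fromBlocks_mulVec]
  rw [show (Sum.elim Gu Gw ∘ Sum.inl) = Gu from rfl,
    show (Sum.elim Gu Gw ∘ Sum.inr) = Gw from rfl]
  ext (i | i)
  · simp only [Sum.elim_inl, Pi.smul_apply, Pi.add_apply]
    congr 1
    rw [mulVec_sub]
    simp only [Matrix.neg_mulVec, ← Matrix.mulVec_mulVec, Pi.add_apply, Pi.sub_apply,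
      Pi.neg_apply]
    ring
  · simp only [Sum.elim_inr, Pi.smul_apply, Pi.add_apply]
    congr 1
    rw [identI4 Huu Huw Hww hu hw hdu hdw, identI2 Huu Huw Hww hu hw hdu hdw,
      mulVec_sub]
    simp only [Matrix.neg_mulVec, Matrix.add_mulVec, ← Matrix.mulVec_mulVec, Pi.add_apply,
      Pi.sub_apply, Pi.neg_apply]
    ring
end Combined

section Quad
variable {m d : Type*} [Fintype m] [Fintype d] [DecidableEq m] [DecidableEq d]
variable (Huu : Matrix m m ℝ) (Huw : Matrix m d ℝ) (Hww : Matrix d d ℝ)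
variable (Gu : m → ℝ) (Gw : d → ℝ)

lemma qlemma (sym : Hwwᵀ = Hww) (hu : IsUnit Huu.det) (hw : IsUnit Hww.det)
    (hdu : IsUnit (Huu - Huw * Hww⁻¹ * Huwᵀ).det) :
    Sum.elim Gu Gw ⬝ᵥ ((fromBlocks Huu Huw Huwᵀ Hww)⁻¹ *ᵥ Sum.elim Gu Gw) =
      Gw ⬝ᵥ (Hww⁻¹ *ᵥ Gw) + (Gu - (Huw * Hww⁻¹) *ᵥ Gw) ⬝ᵥ
        ((Huu - Huw * Hww⁻¹ * Huwᵀ)⁻¹ *ᵥ (Gu - (Huw * Hww⁻¹) *ᵥ Gw)) := by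
  rw [blockInv Huu Huw Hww hu hw hdu, fromBlocks_mulVec]
  rw [show (Sum.elim Gu Gw ∘ Sum.inl) = Gu from rfl,
    show (Sum.elim Gu Gw ∘ Sum.inr) = Gw from rfl,
    sumElim_dotProduct_sumElim]
  set q : m → ℝ := Gu - (Huw * Hww⁻¹) *ᵥ Gw with hq
  have e1 : (Huu - Huw * Hww⁻¹ * Huwᵀ)⁻¹ *ᵥ Gu +
      (-((Huu - Huw * Hww⁻¹ * Huwᵀ)⁻¹ * Huw * Hww⁻¹)) *ᵥ Gw =
      (Huu - Huw * Hww⁻¹ * Huwᵀ)⁻¹ *ᵥ q := by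
    rw [hq, mulVec_sub]
    simp only [Matrix.neg_mulVec, ← Matrix.mulVec_mulVec]
    abel
  have e2 : (-(Hww⁻¹ * Huwᵀ * (Huu - Huw * Hww⁻¹ * Huwᵀ)⁻¹)) *ᵥ Gu +
      (Hww⁻¹ + Hww⁻¹ * Huwᵀ * (Huu - Huw * Hww⁻¹ * Huwᵀ)⁻¹ * Huw * Hww⁻¹) *ᵥ Gw =
      Hww⁻¹ *ᵥ Gw - (Hww⁻¹ * Huwᵀ) *ᵥ ((Huu - Huw * Hww⁻¹ * Huwᵀ)⁻¹ *ᵥ q) := by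
    rw [hq, mulVec_sub, mulVec_sub]
    simp only [Matrix.neg_mulVec, Matrix.add_mulVec, ← Matrix.mulVec_mulVec]
    abel
  rw [e1, e2]
  have e3 : Gw ⬝ᵥ ((Hww⁻¹ * Huwᵀ) *ᵥ ((Huu - Huw * Hww⁻¹ * Huwᵀ)⁻¹ *ᵥ q)) =
      ((Huw * Hww⁻¹) *ᵥ Gw) ⬝ᵥ ((Huu - Huw * Hww⁻¹ * Huwᵀ)⁻¹ *ᵥ q) := by
    rw [dotProduct_mulVec]
    congr 1
    rw [show Hww⁻¹ * Huwᵀ = (Huw * Hww⁻¹)ᵀ by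
      rw [transpose_mul, transpose_nonsing_inv, sym], vecMul_transpose]
  rw [dotProduct_sub, e3, hq]
  simp only [sub_dotProduct]
  ring
end Quad

section THT
variable {n k : Type*} [Fintype n] [Fintype k] [DecidableEq n] [DecidableEq k]
variable (Hxx : Matrix n n ℝ) (F : Matrix n k ℝ) (M : Matrix k k ℝ)

lemma THTlemma (U : Matrix k n ℝ) (hM : IsUnit M.det) (hMs : Mᵀ = M)
    (hU : U = -(M⁻¹ * Fᵀ)) :
    (fromCols (1 : Matrix n n ℝ) Uᵀ) * (fromBlocks Hxx F Fᵀ M) * (fromRows (1 : Matrix n n ℝ) U) =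
      Hxx - F * M⁻¹ * Fᵀ := by
  have hUt : Uᵀ = -(F * M⁻¹) := by
    rw [hU, transpose_neg, transpose_mul, transpose_nonsing_inv, hMs, transpose_transpose]
  rw [fromCols_mul_fromBlocks, fromCols_mul_fromRows, hUt, hU]
  have h0 : F + -(F * M⁻¹) * M = 0 := by
    rw [Matrix.neg_mul, Matrix.mul_assoc, Matrix.nonsing_inv_mul _ hM, Matrix.mul_one]
    abel
  rw [Matrix.one_mul, Matrix.one_mul, h0, Matrix.zero_mul, add_zero, Matrix.mul_one,
    Matrix.neg_mul, sub_eq_add_neg]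

variable (Gx : n → ℝ) (h : k → ℝ)

lemma Glemma (U : Matrix k n ℝ) (v : k → ℝ) (hM : IsUnit M.det) (hMs : Mᵀ = M)
    (hv : v = (-(1:ℝ) / 2) • (M⁻¹ *ᵥ h)) :
    (Sum.elim Gx h + (2:ℝ) • (Sum.elim (0 : n → ℝ) v ᵥ* fromBlocks Hxx F Fᵀ M)) ᵥ*
      fromRows 1 U = Gx - (F * M⁻¹) *ᵥ h := by
  have hMv : v ᵥ* M = (-(1:ℝ) / 2) • h := by
    have e : v ᵥ* M = M *ᵥ v := by conv_lhs => rw [← hMs, vecMul_transpose]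
    rw [e, hv, Matrix.mulVec_smul, Matrix.mulVec_mulVec, Matrix.mul_nonsing_inv _ hM,
      Matrix.one_mulVec]
  have hξ : Sum.elim Gx h + (2:ℝ) • (Sum.elim (0 : n → ℝ) v ᵥ* fromBlocks Hxx F Fᵀ M) =
      Sum.elim (Gx + (2:ℝ) • (F *ᵥ v)) 0 := by
    rw [vecMul_fromBlocks,
      show (Sum.elim (0 : n → ℝ) v ∘ Sum.inl) = 0 from rfl,
      show (Sum.elim (0 : n → ℝ) v ∘ Sum.inr) = v from rfl,
      Matrix.zero_vecMul, Matrix.zero_vecMul, zero_add, zero_add, vecMul_transpose, hMv]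
    ext (j | j) <;>
      simp only [Pi.add_apply, Pi.smul_apply, Sum.elim_inl, Sum.elim_inr, Pi.zero_apply,
        smul_eq_mul] <;> ring
  rw [hξ, sumElim_vecMul_fromRows, Matrix.vecMul_one, Matrix.zero_vecMul, add_zero, hv]
  ext j
  simp only [Matrix.mulVec_smul, ← Matrix.mulVec_mulVec, Pi.add_apply, Pi.smul_apply,
    Pi.sub_apply, smul_eq_mul]
  ring

lemma slemma (v : k → ℝ) (hM : IsUnit M.det) (hMs : Mᵀ = M)
    (hv : v = (-(1:ℝ) / 2) • (M⁻¹ *ᵥ h)) :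
    Sum.elim Gx h ⬝ᵥ Sum.elim (0 : n → ℝ) v +
      Sum.elim (0 : n → ℝ) v ⬝ᵥ (fromBlocks Hxx F Fᵀ M *ᵥ Sum.elim (0 : n → ℝ) v) =
      -(1 / 4 : ℝ) * (h ⬝ᵥ (M⁻¹ *ᵥ h)) := by
  have hMv : M *ᵥ v = (-(1:ℝ) / 2) • h := by
    rw [hv, Matrix.mulVec_smul, Matrix.mulVec_mulVec, Matrix.mul_nonsing_inv _ hM,
      Matrix.one_mulVec]
  rw [fromBlocks_mulVec,
    show (Sum.elim (0 : n → ℝ) v ∘ Sum.inl) = 0 from rfl,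
    show (Sum.elim (0 : n → ℝ) v ∘ Sum.inr) = v from rfl,
    sumElim_dotProduct_sumElim, sumElim_dotProduct_sumElim,
    Matrix.mulVec_zero, Matrix.mulVec_zero, zero_add, zero_add, hMv,
    dotProduct_zero, zero_add, hv]
  rw [dotProduct_smul, smul_dotProduct, dotProduct_smul, zero_dotProduct,
    dotProduct_comm (M⁻¹ *ᵥ h) h]
  simp only [smul_eq_mul]
  ring
end THT

section Steps
variable {n m d : Type*} [Fintype n] [Fintype m] [Fintype d]
variable [DecidableEq n] [DecidableEq m] [DecidableEq d]

lemma real_conjT {a b : Type*} (B : Matrix a b ℝ) : Bᴴ = Bᵀ := by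
  ext i j; simp [conjTranspose_apply]

lemma psd_sandwich {a b : Type*} [Fintype a] [Fintype b] {P : Matrix a a ℝ}
    (hP : P.PosSemidef) (B : Matrix b a ℝ) : (B * P * Bᵀ).PosSemidef := by
  have := hP.mul_mul_conjTranspose_same B
  rwa [real_conjT] at this

lemma pd_quad_pos {M : Matrix n n ℝ} (hM : M.PosDef) (x : n → ℝ) (hx : x ≠ 0) :
    0 < x ⬝ᵥ (M *ᵥ x) := by simpa using hM.dotProduct_mulVec_pos hx

lemma neg_isUnit_det {N : Matrix d d ℝ} (hN : N.PosDef) : IsUnit (-N).det := by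
  rw [det_neg, isUnit_iff_ne_zero]
  exact mul_ne_zero (pow_ne_zero _ (by norm_num)) hN.det_pos.ne'

variable (A : Matrix n n ℝ) (B : Matrix n m ℝ) (E : Matrix n d ℝ)
variable (Q : Matrix n n ℝ) (R : Matrix m m ℝ) (α lam : ℝ) (P : Matrix n n ℝ)

lemma units_step (hα : 0 < α) (hR : R.PosDef) (hP : P.PosSemidef)
    (hN : (lam • (1 : Matrix d d ℝ) - α • (Eᵀ * P * E)).PosDef) :
    (R + α • (Bᵀ * P * B)).PosDef ∧
    IsUnit (R + α • (Bᵀ * P * B)).det ∧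
    IsUnit (α • (Eᵀ * P * E) - lam • (1 : Matrix d d ℝ)).det ∧
    (α • (Eᵀ * P * E) - lam • (1 : Matrix d d ℝ))⁻¹ =
      -((lam • (1 : Matrix d d ℝ) - α • (Eᵀ * P * E))⁻¹) ∧
    IsUnit ((R + α • (Bᵀ * P * B)) - α • (Bᵀ * P * E) *
      (α • (Eᵀ * P * E) - lam • (1 : Matrix d d ℝ))⁻¹ * (α • (Bᵀ * P * E))ᵀ).det ∧
    IsUnit ((α • (Eᵀ * P * E) - lam • (1 : Matrix d d ℝ)) - (α • (Bᵀ * P * E))ᵀ *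
      (R + α • (Bᵀ * P * B))⁻¹ * (α • (Bᵀ * P * E))).det := by
  have hBPB : (α • (Bᵀ * P * B)).PosSemidef := by
    refine psd_smul ?_ hα.le
    have := psd_sandwich hP Bᵀ
    rwa [transpose_transpose] at this
  have hHuu : (R + α • (Bᵀ * P * B)).PosDef := hR.add_posSemidef hBPB
  have hu : IsUnit (R + α • (Bᵀ * P * B)).det := hHuu.det_pos.ne'.isUnit
  have hHwwN : α • (Eᵀ * P * E) - lam • (1 : Matrix d d ℝ) =
      -(lam • (1 : Matrix d d ℝ) - α • (Eᵀ * P * E)) := by rw [neg_sub]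
  have hw : IsUnit (α • (Eᵀ * P * E) - lam • (1 : Matrix d d ℝ)).det := by
    rw [hHwwN]; exact neg_isUnit_det hN
  have hinv : (α • (Eᵀ * P * E) - lam • (1 : Matrix d d ℝ))⁻¹ =
      -((lam • (1 : Matrix d d ℝ) - α • (Eᵀ * P * E))⁻¹) := by
    rw [hHwwN, neg_inv_mat]
  refine ⟨hHuu, hu, hw, hinv, ?_, ?_⟩
  · have hpd : ((R + α • (Bᵀ * P * B)) + α • (Bᵀ * P * E) *
        (lam • (1 : Matrix d d ℝ) - α • (Eᵀ * P * E))⁻¹ * (α • (Bᵀ * P * E))ᵀ).PosDef := by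
      refine hHuu.add_posSemidef ?_
      have := psd_sandwich hN.inv.posSemidef (α • (Bᵀ * P * E))
      convert this using 2
    have heq : (R + α • (Bᵀ * P * B)) - α • (Bᵀ * P * E) *
        (α • (Eᵀ * P * E) - lam • (1 : Matrix d d ℝ))⁻¹ * (α • (Bᵀ * P * E))ᵀ =
        (R + α • (Bᵀ * P * B)) + α • (Bᵀ * P * E) *
        (lam • (1 : Matrix d d ℝ) - α • (Eᵀ * P * E))⁻¹ * (α • (Bᵀ * P * E))ᵀ := by
      rw [hinv, Matrix.mul_neg, Matrix.neg_mul, sub_neg_eq_add]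
    rw [heq]
    exact hpd.det_pos.ne'.isUnit
  · have hpd : ((lam • (1 : Matrix d d ℝ) - α • (Eᵀ * P * E)) + (α • (Bᵀ * P * E))ᵀ *
        (R + α • (Bᵀ * P * B))⁻¹ * (α • (Bᵀ * P * E))).PosDef := by
      refine hN.add_posSemidef ?_
      have := psd_sandwich hHuu.inv.posSemidef (α • (Bᵀ * P * E))ᵀ
      rwa [transpose_transpose] at this
    have heq : (α • (Eᵀ * P * E) - lam • (1 : Matrix d d ℝ)) - (α • (Bᵀ * P * E))ᵀ *
        (R + α • (Bᵀ * P * B))⁻¹ * (α • (Bᵀ * P * E)) =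
        -((lam • (1 : Matrix d d ℝ) - α • (Eᵀ * P * E)) + (α • (Bᵀ * P * E))ᵀ *
        (R + α • (Bᵀ * P * B))⁻¹ * (α • (Bᵀ * P * E))) := by
      rw [neg_add, ← hHwwN]; abel
    rw [heq]
    exact neg_isUnit_det hpd
end Steps

section DotHelp
variable {a b c : Type*} [Fintype a] [Fintype b] [Fintype c]

lemma dotT (A : Matrix a b ℝ) (x : b → ℝ) (z : a → ℝ) :
    x ⬝ᵥ (Aᵀ *ᵥ z) = (A *ᵥ x) ⬝ᵥ z := by
  rw [mulVec_transpose, dotProduct_comm, ← dotProduct_mulVec, dotProduct_comm]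

lemma sandwich_dot (X : Matrix c a ℝ) (P : Matrix c c ℝ) (Y : Matrix c b ℝ)
    (x : a → ℝ) (v : b → ℝ) :
    x ⬝ᵥ ((Xᵀ * P * Y) *ᵥ v) = (X *ᵥ x) ⬝ᵥ (P *ᵥ (Y *ᵥ v)) := by
  rw [← Matrix.mulVec_mulVec, ← Matrix.mulVec_mulVec, dotT]

lemma dp_sym {P : Matrix c c ℝ} (hPs : Pᵀ = P) (v w : c → ℝ) :
    v ⬝ᵥ (P *ᵥ w) = w ⬝ᵥ (P *ᵥ v) := by
  rw [dotProduct_mulVec, dotProduct_comm, ← mulVec_transpose, hPs]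
end DotHelp

section PSDStep
variable {n m d : Type*} [Fintype n] [Fintype m] [Fintype d]
variable [DecidableEq n] [DecidableEq m] [DecidableEq d]
variable (A : Matrix n n ℝ) (B : Matrix n m ℝ) (E : Matrix n d ℝ)
variable (Q : Matrix n n ℝ) (R : Matrix m m ℝ) (α lam : ℝ) (P : Matrix n n ℝ)

lemma Msym (hP : P.PosSemidef) (hPs : Pᵀ = P) (hR : R.PosDef) :
    (fromBlocks (R + α • (Bᵀ * P * B)) (α • (Bᵀ * P * E)) (α • (Bᵀ * P * E))ᵀ
      (α • (Eᵀ * P * E) - lam • (1 : Matrix d d ℝ)))ᵀ =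
    fromBlocks (R + α • (Bᵀ * P * B)) (α • (Bᵀ * P * E)) (α • (Bᵀ * P * E))ᵀ
      (α • (Eᵀ * P * E) - lam • (1 : Matrix d d ℝ)) := by
  have hRt : Rᵀ = R := (herm_iff_transpose R).mp hR.isHermitian
  have h11 : (R + α • (Bᵀ * P * B))ᵀ = R + α • (Bᵀ * P * B) := by
    rw [transpose_add, hRt, transpose_smul, transpose_mul, transpose_mul,
      transpose_transpose, hPs, ← Matrix.mul_assoc]
  have h22 : (α • (Eᵀ * P * E) - lam • (1 : Matrix d d ℝ))ᵀ =
      α • (Eᵀ * P * E) - lam • (1 : Matrix d d ℝ) := by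
    rw [transpose_sub, transpose_smul, transpose_smul, transpose_one, transpose_mul,
      transpose_mul, transpose_transpose, hPs, ← Matrix.mul_assoc]
  rw [fromBlocks_transpose, transpose_transpose, h11, h22]

lemma Mdet (hα : 0 < α) (hR : R.PosDef) (hP : P.PosSemidef)
    (hN : (lam • (1 : Matrix d d ℝ) - α • (Eᵀ * P * E)).PosDef) :
    IsUnit (fromBlocks (R + α • (Bᵀ * P * B)) (α • (Bᵀ * P * E)) (α • (Bᵀ * P * E))ᵀ
      (α • (Eᵀ * P * E) - lam • (1 : Matrix d d ℝ))).det := by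
  obtain ⟨hHuu, hu, hw, hinv, hdu, hdw⟩ := units_step B E R α lam P hα hR hP hN
  letI := Matrix.invertibleOfIsUnitDet _ hu
  rw [det_fromBlocks₁₁, invOf_eq_nonsing_inv]
  exact hu.mul hdw

set_option maxHeartbeats 2000000 in
lemma psd_step (hα : 0 < α) (hQ : Q.PosSemidef) (hR : R.PosDef) (hP : P.PosSemidef)
    (hPs : Pᵀ = P)
    (hN : (lam • (1 : Matrix d d ℝ) - α • (Eᵀ * P * E)).PosDef) :
    (Q + α • (Aᵀ * P * A) -
      fromCols (α • (Aᵀ * P * B)) (α • (Aᵀ * P * E)) *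
        (fromBlocks (R + α • (Bᵀ * P * B)) (α • (Bᵀ * P * E)) (α • (Bᵀ * P * E))ᵀ
          (α • (Eᵀ * P * E) - lam • (1 : Matrix d d ℝ)))⁻¹ *
        (fromCols (α • (Aᵀ * P * B)) (α • (Aᵀ * P * E)))ᵀ).PosSemidef ∧
    (Q + α • (Aᵀ * P * A) -
      fromCols (α • (Aᵀ * P * B)) (α • (Aᵀ * P * E)) *
        (fromBlocks (R + α • (Bᵀ * P * B)) (α • (Bᵀ * P * E)) (α • (Bᵀ * P * E))ᵀ
          (α • (Eᵀ * P * E) - lam • (1 : Matrix d d ℝ)))⁻¹ *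
        (fromCols (α • (Aᵀ * P * B)) (α • (Aᵀ * P * E)))ᵀ)ᵀ =
    Q + α • (Aᵀ * P * A) -
      fromCols (α • (Aᵀ * P * B)) (α • (Aᵀ * P * E)) *
        (fromBlocks (R + α • (Bᵀ * P * B)) (α • (Bᵀ * P * E)) (α • (Bᵀ * P * E))ᵀ
          (α • (Eᵀ * P * E) - lam • (1 : Matrix d d ℝ)))⁻¹ *
        (fromCols (α • (Aᵀ * P * B)) (α • (Aᵀ * P * E)))ᵀ := by
  set Huu := R + α • (Bᵀ * P * B) with hHuudef
  set Huw := α • (Bᵀ * P * E) with hHuwdef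
  set Hww := α • (Eᵀ * P * E) - lam • (1 : Matrix d d ℝ) with hHwwdef
  set Hxu := α • (Aᵀ * P * B) with hHxudef
  set Hxw := α • (Aᵀ * P * E) with hHxwdef
  set Hxx := Q + α • (Aᵀ * P * A) with hHxxdef
  set F := fromCols Hxu Hxw with hFdef
  set M := fromBlocks Huu Huw Huwᵀ Hww with hMdef
  have hMs : Mᵀ = M := Msym B E R α lam P hP hPs hR
  have hMu : IsUnit M.det := Mdet B E R α lam P hα hR hP hN
  have hMis : (M⁻¹)ᵀ = M⁻¹ := by rw [transpose_nonsing_inv, hMs]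
  have hQt : Qᵀ = Q := (herm_iff_transpose Q).mp hQ.isHermitian
  have hHxxs : Hxxᵀ = Hxx := by
    rw [hHxxdef, transpose_add, hQt, transpose_smul, transpose_mul, transpose_mul,
      transpose_transpose, hPs, ← Matrix.mul_assoc]
  have hsymm : (Hxx - F * M⁻¹ * Fᵀ)ᵀ = Hxx - F * M⁻¹ * Fᵀ := by
    rw [transpose_sub, hHxxs, transpose_mul, transpose_mul, transpose_transpose,
      hMis, Matrix.mul_assoc]
  refine ⟨posSemidef_iff_dotProduct_mulVec.mpr ⟨(herm_iff_transpose _).mpr hsymm, fun x => ?_⟩, hsymm⟩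
  have hsx : star x = x := by ext i; simp
  rw [hsx]
  set κ : (m ⊕ d) → ℝ := -(M⁻¹ *ᵥ (Fᵀ *ᵥ x)) with hκdef
  set u := fun j => κ (Sum.inl j) with hudef
  set w := fun j => κ (Sum.inr j) with hwdef
  have hκ : κ = Sum.elim u w := by ext (j | j) <;> rfl
  have hstat : M *ᵥ κ = -(Fᵀ *ᵥ x) := by
    rw [hκdef, Matrix.mulVec_neg, Matrix.mulVec_mulVec, Matrix.mul_nonsing_inv _ hMu,
      Matrix.one_mulVec]
  have hFt : Fᵀ = fromRows Hxuᵀ Hxwᵀ := by rw [hFdef, transpose_fromCols]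
  have hstat' : Sum.elim (Huu *ᵥ u + Huw *ᵥ w) (Huwᵀ *ᵥ u + Hww *ᵥ w) =
      -(Sum.elim (Hxuᵀ *ᵥ x) (Hxwᵀ *ᵥ x)) := by
    calc Sum.elim (Huu *ᵥ u + Huw *ᵥ w) (Huwᵀ *ᵥ u + Hww *ᵥ w) = M *ᵥ κ := by
          rw [hMdef, hκ, fromBlocks_mulVec, Sum.elim_comp_inl, Sum.elim_comp_inr]
      _ = -(Fᵀ *ᵥ x) := hstat
      _ = -(Sum.elim (Hxuᵀ *ᵥ x) (Hxwᵀ *ᵥ x)) := by rw [hFt, fromRows_mulVec]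
  have hS2 : Huwᵀ *ᵥ u + Hww *ᵥ w = -(Hxwᵀ *ᵥ x) := by
    ext j
    have h := congrFun hstat' (Sum.inr j)
    simpa using h
  have hFκ : F *ᵥ κ = Hxu *ᵥ u + Hxw *ᵥ w := by
    rw [hFdef, hκ, fromCols_mulVec_sumElim]
  have hval : x ⬝ᵥ ((Hxx - F * M⁻¹ * Fᵀ) *ᵥ x) = x ⬝ᵥ (Hxx *ᵥ x) + x ⬝ᵥ (F *ᵥ κ) := by
    rw [Matrix.sub_mulVec, dotProduct_sub, hκdef, Matrix.mulVec_neg, dotProduct_neg,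
      Matrix.mulVec_mulVec, Matrix.mulVec_mulVec, sub_eq_add_neg]
  have hκMκ : κ ⬝ᵥ (M *ᵥ κ) = -(x ⬝ᵥ (F *ᵥ κ)) := by
    rw [hstat, dotProduct_neg, dotT, dotProduct_comm]
  set ax := A *ᵥ x with haxdef
  set bu := B *ᵥ u with hbudef
  set ew := E *ᵥ w with hewdef
  have e1 : x ⬝ᵥ (Hxx *ᵥ x) = x ⬝ᵥ (Q *ᵥ x) + α * (ax ⬝ᵥ (P *ᵥ ax)) := by
    rw [hHxxdef, Matrix.add_mulVec, dotProduct_add, Matrix.smul_mulVec,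
      dotProduct_smul, smul_eq_mul, sandwich_dot, haxdef]
  have e2 : x ⬝ᵥ (F *ᵥ κ) = α * (ax ⬝ᵥ (P *ᵥ bu)) + α * (ax ⬝ᵥ (P *ᵥ ew)) := by
    rw [hFκ, dotProduct_add, hHxudef, hHxwdef, Matrix.smul_mulVec,
      Matrix.smul_mulVec, dotProduct_smul, dotProduct_smul, smul_eq_mul,
      smul_eq_mul, sandwich_dot, sandwich_dot, haxdef, hbudef, hewdef]
  have hHuwT : Huwᵀ = α • (Eᵀ * P * B) := by
    rw [hHuwdef, transpose_smul, transpose_mul, transpose_mul, transpose_transpose,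
      hPs, ← Matrix.mul_assoc]
  have hHxwT : Hxwᵀ = α • (Eᵀ * P * A) := by
    rw [hHxwdef, transpose_smul, transpose_mul, transpose_mul, transpose_transpose,
      hPs, ← Matrix.mul_assoc]
  have hlamw : w ⬝ᵥ ((lam • (1 : Matrix d d ℝ)) *ᵥ w) = lam * (w ⬝ᵥ w) := by
    rw [Matrix.smul_mulVec, Matrix.one_mulVec, dotProduct_smul, smul_eq_mul]
  have e3 : κ ⬝ᵥ (M *ᵥ κ) = u ⬝ᵥ (R *ᵥ u) + α * (bu ⬝ᵥ (P *ᵥ bu)) + α * (bu ⬝ᵥ (P *ᵥ ew)) +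
      α * (ew ⬝ᵥ (P *ᵥ bu)) + (α * (ew ⬝ᵥ (P *ᵥ ew)) - lam * (w ⬝ᵥ w)) := by
    rw [hMdef, hκ, fromBlocks_mulVec, Sum.elim_comp_inl, Sum.elim_comp_inr,
      sumElim_dotProduct_sumElim, dotProduct_add, dotProduct_add, hHuudef, hHuwdef,
      hHuwT, hHwwdef, Matrix.add_mulVec, Matrix.sub_mulVec, dotProduct_add, dotProduct_sub,
      hlamw, Matrix.smul_mulVec, Matrix.smul_mulVec, Matrix.smul_mulVec,
      Matrix.smul_mulVec, dotProduct_smul, dotProduct_smul, dotProduct_smul,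
      dotProduct_smul, smul_eq_mul, smul_eq_mul, smul_eq_mul, smul_eq_mul,
      sandwich_dot, sandwich_dot, sandwich_dot, sandwich_dot]
    ring
  have hsc : α * (ew ⬝ᵥ (P *ᵥ bu)) + (α * (ew ⬝ᵥ (P *ᵥ ew)) - lam * (w ⬝ᵥ w)) +
      α * (ew ⬝ᵥ (P *ᵥ ax)) = 0 := by
    have h := congrArg (fun z => w ⬝ᵥ z) hS2
    simp only [dotProduct_add, dotProduct_neg] at h
    rw [hHuwT, hHxwT, hHwwdef, Matrix.sub_mulVec, dotProduct_sub, hlamw,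
      Matrix.smul_mulVec, Matrix.smul_mulVec, Matrix.smul_mulVec,
      dotProduct_smul, dotProduct_smul, dotProduct_smul, smul_eq_mul, smul_eq_mul,
      smul_eq_mul, sandwich_dot, sandwich_dot, sandwich_dot] at h
    linarith
  have hV2 : x ⬝ᵥ ((Hxx - F * M⁻¹ * Fᵀ) *ᵥ x) =
      x ⬝ᵥ (Hxx *ᵥ x) + 2 * (x ⬝ᵥ (F *ᵥ κ)) + κ ⬝ᵥ (M *ᵥ κ) := by
    rw [hval, hκMκ]; ring
  have hy0 : 0 ≤ (ax + bu) ⬝ᵥ (P *ᵥ (ax + bu)) := psd_quad hP _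
  have hNq : 0 ≤ lam * (w ⬝ᵥ w) - α * (ew ⬝ᵥ (P *ᵥ ew)) := by
    have h := pd_quad hN w
    rw [Matrix.sub_mulVec, dotProduct_sub, hlamw, Matrix.smul_mulVec,
      dotProduct_smul, smul_eq_mul, sandwich_dot] at h
    linarith
  have hyexp : (ax + bu) ⬝ᵥ (P *ᵥ (ax + bu)) = ax ⬝ᵥ (P *ᵥ ax) + 2 * (ax ⬝ᵥ (P *ᵥ bu)) +
      bu ⬝ᵥ (P *ᵥ bu) := by
    simp only [Matrix.mulVec_add, dotProduct_add, add_dotProduct]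
    rw [dp_sym hPs bu ax]
    ring
  have hQx : 0 ≤ x ⬝ᵥ (Q *ᵥ x) := psd_quad hQ x
  have hRu : 0 ≤ u ⬝ᵥ (R *ᵥ u) := psd_quad hR.posSemidef u
  have hsym1 : bu ⬝ᵥ (P *ᵥ ew) = ew ⬝ᵥ (P *ᵥ bu) := dp_sym hPs bu ew
  have hsym2 : ax ⬝ᵥ (P *ᵥ ew) = ew ⬝ᵥ (P *ᵥ ax) := dp_sym hPs ax ew
  rw [hV2, e1, e2, e3]
  nlinarith [mul_nonneg hα.le hy0, hyexp, hsym1, hsym2, hsc, hNq, hQx, hRu]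
end PSDStep

section Struct
variable {n m d : Type*} [Fintype n] [Fintype m] [Fintype d]
variable [DecidableEq n] [DecidableEq m] [DecidableEq d]

lemma smul_fromCols {a b c : Type*} (r : ℝ) (X : Matrix a b ℝ) (Y : Matrix a c ℝ) :
    r • fromCols X Y = fromCols (r • X) (r • Y) := by
  ext i (j | j) <;> simp [fromCols]

lemma smul_fromRows {a b c : Type*} (r : ℝ) (X : Matrix a c ℝ) (Y : Matrix b c ℝ) :
    r • fromRows X Y = fromRows (r • X) (r • Y) := by
  ext (i | i) j <;> simp [fromRows_apply_inl, fromRows_apply_inr]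

variable (A : Matrix n n ℝ) (B : Matrix n m ℝ) (E : Matrix n d ℝ)
variable (Q : Matrix n n ℝ) (R : Matrix m m ℝ) (α lam : ℝ) (P : Matrix n n ℝ)

lemma fromRows_fromCols_fromBlocks {a b c e f : Type*}
    (X : Matrix a b ℝ) (Y : Matrix a c ℝ) (Z : Matrix e b ℝ) (U : Matrix f b ℝ)
    (V : Matrix e c ℝ) (T : Matrix f c ℝ) :
    fromRows (fromCols X Y) (fromBlocks Z V U T) =
      fromBlocks X Y (fromRows Z U) (fromRows V T) := by
  rw [← fromCols_fromRows_eq_fromBlocks, fromRows_fromCols_eq_fromBlocks]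

lemma WSPS :
    fromBlocks Q 0 0 (fromBlocks R 0 0 ((-lam) • (1 : Matrix d d ℝ))) +
      α • ((fromCols A (fromCols B E))ᵀ * P * fromCols A (fromCols B E)) =
    fromBlocks (Q + α • (Aᵀ * P * A))
      (fromCols (α • (Aᵀ * P * B)) (α • (Aᵀ * P * E)))
      (fromRows (α • (Bᵀ * P * A)) (α • (Eᵀ * P * A)))
      (fromBlocks (R + α • (Bᵀ * P * B)) (α • (Bᵀ * P * E)) (α • (Eᵀ * P * B))
        (α • (Eᵀ * P * E) - lam • (1 : Matrix d d ℝ))) := by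
  ext (i | i | i) (j | j | j) <;>
    simp [fromBlocks, fromCols, fromRows_apply_inl, fromRows_apply_inr, Matrix.mul_apply, Matrix.one_apply,
      Finset.sum_mul, Finset.mul_sum, mul_comm, mul_left_comm] <;>
    try ring_nf <;> try simp

lemma blockT_as_FM (hPs : Pᵀ = P) :
    fromBlocks (Q + α • (Aᵀ * P * A))
      (fromCols (α • (Aᵀ * P * B)) (α • (Aᵀ * P * E)))
      (fromRows (α • (Bᵀ * P * A)) (α • (Eᵀ * P * A)))
      (fromBlocks (R + α • (Bᵀ * P * B)) (α • (Bᵀ * P * E)) (α • (Eᵀ * P * B))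
        (α • (Eᵀ * P * E) - lam • (1 : Matrix d d ℝ))) =
    fromBlocks (Q + α • (Aᵀ * P * A))
      (fromCols (α • (Aᵀ * P * B)) (α • (Aᵀ * P * E)))
      (fromCols (α • (Aᵀ * P * B)) (α • (Aᵀ * P * E)))ᵀ
      (fromBlocks (R + α • (Bᵀ * P * B)) (α • (Bᵀ * P * E)) (α • (Bᵀ * P * E))ᵀ
        (α • (Eᵀ * P * E) - lam • (1 : Matrix d d ℝ))) := by
  have h1 : (α • (Aᵀ * P * B))ᵀ = α • (Bᵀ * P * A) := by
    rw [transpose_smul, transpose_mul, transpose_mul, transpose_transpose, hPs,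
      ← Matrix.mul_assoc]
  have h2 : (α • (Aᵀ * P * E))ᵀ = α • (Eᵀ * P * A) := by
    rw [transpose_smul, transpose_mul, transpose_mul, transpose_transpose, hPs,
      ← Matrix.mul_assoc]
  have h3 : (α • (Bᵀ * P * E))ᵀ = α • (Eᵀ * P * B) := by
    rw [transpose_smul, transpose_mul, transpose_mul, transpose_transpose, hPs,
      ← Matrix.mul_assoc]
  rw [transpose_fromCols, h1, h2, h3]
end Struct

section Extract
variable {n m d : Type*}
variable (X : Matrix n n ℝ) (Y1 : Matrix n m ℝ) (Y2 : Matrix n d ℝ)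
variable (Z1 : Matrix m n ℝ) (Z2 : Matrix d n ℝ)
variable (W1 : Matrix m m ℝ) (W2 : Matrix m d ℝ) (W3 : Matrix d m ℝ) (W4 : Matrix d d ℝ)

lemma ex_xu : (fromBlocks X (fromCols Y1 Y2) (fromRows Z1 Z2)
    (fromBlocks W1 W2 W3 W4)).submatrix Sum.inl (fun a : m => Sum.inr (Sum.inl a)) = Y1 := by
  ext a b; rfl
lemma ex_xw : (fromBlocks X (fromCols Y1 Y2) (fromRows Z1 Z2)
    (fromBlocks W1 W2 W3 W4)).submatrix Sum.inl (fun a : d => Sum.inr (Sum.inr a)) = Y2 := by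
  ext a b; rfl
lemma ex_uu : (fromBlocks X (fromCols Y1 Y2) (fromRows Z1 Z2)
    (fromBlocks W1 W2 W3 W4)).submatrix (fun a : m => Sum.inr (Sum.inl a))
    (fun a : m => Sum.inr (Sum.inl a)) = W1 := by
  ext a b; rfl
lemma ex_uw : (fromBlocks X (fromCols Y1 Y2) (fromRows Z1 Z2)
    (fromBlocks W1 W2 W3 W4)).submatrix (fun a : m => Sum.inr (Sum.inl a))
    (fun a : d => Sum.inr (Sum.inr a)) = W2 := by
  ext a b; rfl
lemma ex_ww : (fromBlocks X (fromCols Y1 Y2) (fromRows Z1 Z2)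
    (fromBlocks W1 W2 W3 W4)).submatrix (fun a : d => Sum.inr (Sum.inr a))
    (fun a : d => Sum.inr (Sum.inr a)) = W4 := by
  ext a b; rfl
end Extract

section TraceV
variable {d : Type*} [Fintype d]
lemma trace_mul_vecMulVec (A : Matrix d d ℝ) (v : d → ℝ) :
    Matrix.trace (A * vecMulVec v v) = v ⬝ᵥ (A *ᵥ v) := by
  simp only [Matrix.trace, Matrix.diag, Matrix.mul_apply, vecMulVec_apply,
    dotProduct, Matrix.mulVec, Finset.mul_sum]
  apply Finset.sum_congr rfl
  intro i _
  apply Finset.sum_congr rfl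
  intro j _
  ring
end TraceV

/-- the exact-iteration invariant of distributionally robust Q-learning:
with `Σ̂ = 0` in the `z`-recursion, each Q-learning parameter update coincides with one
step of the Riccati-type value iteration, i.e. for every `i ≥ 1` the matrix `H_i` has the
standard block structure built from `P_{i−1}`, `G_i` is built from `g_{i−1}`, and
`s_i = αz_{i−1} − λ‖w̄‖²`. -/
theorem stmt17 {n m d : ℕ}
    (A : Matrix (Fin n) (Fin n) ℝ) (B : Matrix (Fin n) (Fin m) ℝ)
    (E : Matrix (Fin n) (Fin d) ℝ)
    (Q : Matrix (Fin n) (Fin n) ℝ) (R : Matrix (Fin m) (Fin m) ℝ)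
    (α lam : ℝ) (hα : α ∈ Set.Ioo (0 : ℝ) 1) (hlam : 0 < lam)
    (hQ : Q.PosSemidef) (hR : R.PosDef)
    (wbar : Fin d → ℝ)
    (Sighat : Matrix (Fin d) (Fin d) ℝ) (hSig : Sighat.PosSemidef)
    (hSig0 : Sighat = 0)
    -- the value-iteration sequences
    (Pseq : ℕ → Matrix (Fin n) (Fin n) ℝ) (gseq : ℕ → Fin n → ℝ) (zseq : ℕ → ℝ)
    (hP0 : Pseq 0 = 0) (hg0 : gseq 0 = 0) (hz0 : zseq 0 = 0)
    (hVIrec : ∀ i : ℕ,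
      ∀ Hxx Hxu Hxw Huu Huw Hww Gx Gu Gw,
        Hxx = Q + α • (Aᵀ * Pseq i * A) →
        Hxu = α • (Aᵀ * Pseq i * B) →
        Hxw = α • (Aᵀ * Pseq i * E) →
        Huu = R + α • (Bᵀ * Pseq i * B) →
        Huw = α • (Bᵀ * Pseq i * E) →
        Hww = α • (Eᵀ * Pseq i * E) - lam • (1 : Matrix (Fin d) (Fin d) ℝ) →
        Gx = α • (Aᵀ *ᵥ gseq i) →
        Gu = α • (Bᵀ *ᵥ gseq i) →
        Gw = α • (Eᵀ *ᵥ gseq i) + (2 * lam) • wbar →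
        Pseq (i + 1) = Hxx - fromCols Hxu Hxw *
            (fromBlocks Huu Huw Huwᵀ Hww)⁻¹ * (fromCols Hxu Hxw)ᵀ ∧
        gseq (i + 1) = Gx - (fromCols Hxu Hxw *
            (fromBlocks Huu Huw Huwᵀ Hww)⁻¹) *ᵥ Sum.elim Gu Gw ∧
        zseq (i + 1) = α * zseq i - lam * (wbar ⬝ᵥ wbar)
          - Matrix.trace (Hww⁻¹ * (lam ^ 2 • Sighat + (1 / 4 : ℝ) • vecMulVec Gw Gw))
          - (1 / 4 : ℝ) * ((Gu - (Huw * Hww⁻¹) *ᵥ Gw) ⬝ᵥ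
              ((Huu - Huw * Hww⁻¹ * Huwᵀ)⁻¹ *ᵥ (Gu - (Huw * Hww⁻¹) *ᵥ Gw))))
    -- fixed matrices of the Q-learning iteration
    (W : Matrix (Fin n ⊕ (Fin m ⊕ Fin d)) (Fin n ⊕ (Fin m ⊕ Fin d)) ℝ)
    (hW : W = fromBlocks Q 0 0
      (fromBlocks R 0 0 ((-lam) • (1 : Matrix (Fin d) (Fin d) ℝ))))
    (S : Matrix (Fin n) (Fin n ⊕ (Fin m ⊕ Fin d)) ℝ)
    (hS : S = fromCols A (fromCols B E))
    (c : Fin n ⊕ (Fin m ⊕ Fin d) → ℝ)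
    (hc : c = Sum.elim (0 : Fin n → ℝ) (Sum.elim (0 : Fin m → ℝ) ((2 * lam) • wbar)))
    -- the Q-learning sequences
    (Hs : ℕ → Matrix (Fin n ⊕ (Fin m ⊕ Fin d)) (Fin n ⊕ (Fin m ⊕ Fin d)) ℝ)
    (Gs : ℕ → Fin n ⊕ (Fin m ⊕ Fin d) → ℝ) (ss : ℕ → ℝ)
    (Ks : ℕ → Matrix (Fin m) (Fin n) ℝ) (rs : ℕ → Fin m → ℝ)
    (Ls : ℕ → Matrix (Fin d) (Fin n) ℝ) (ls : ℕ → Fin d → ℝ)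
    (hH0 : Hs 0 = 0) (hG0 : Gs 0 = 0) (hs0 : ss 0 = 0)
    (hK0 : Ks 0 = 0) (hr0 : rs 0 = 0) (hL0 : Ls 0 = 0) (hl0 : ls 0 = 0)
    (hQLrec : ∀ i : ℕ,
      ∀ (T : Matrix (Fin n ⊕ (Fin m ⊕ Fin d)) (Fin n) ℝ)
        (b : Fin n ⊕ (Fin m ⊕ Fin d) → ℝ),
        T = fromRows (1 : Matrix (Fin n) (Fin n) ℝ) (fromRows (Ks i) (Ls i)) →
        b = Sum.elim (0 : Fin n → ℝ) (Sum.elim (rs i) (ls i)) →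
        Hs (i + 1) = W + α • ((T * S)ᵀ * Hs i * (T * S)) ∧
        Gs (i + 1) = α • ((Gs i + (2 : ℝ) • (b ᵥ* Hs i)) ᵥ* (T * S)) + c ∧
        ss (i + 1) = α * (ss i + Gs i ⬝ᵥ b + b ⬝ᵥ (Hs i *ᵥ b))
          - lam * (wbar ⬝ᵥ wbar))
    -- the policies, computed from the blocks of (H_i, G_i) for i ≥ 1
    (hpol : ∀ i : ℕ, 1 ≤ i →
      ∀ (Hxu : Matrix (Fin n) (Fin m) ℝ) (Hxw : Matrix (Fin n) (Fin d) ℝ)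
        (Huu : Matrix (Fin m) (Fin m) ℝ) (Huw : Matrix (Fin m) (Fin d) ℝ)
        (Hww : Matrix (Fin d) (Fin d) ℝ) (Gu : Fin m → ℝ) (Gw : Fin d → ℝ),
        Hxu = (Hs i).submatrix Sum.inl (fun a : Fin m => Sum.inr (Sum.inl a)) →
        Hxw = (Hs i).submatrix Sum.inl (fun a : Fin d => Sum.inr (Sum.inr a)) →
        Huu = (Hs i).submatrix (fun a : Fin m => Sum.inr (Sum.inl a))
          (fun a : Fin m => Sum.inr (Sum.inl a)) →
        Huw = (Hs i).submatrix (fun a : Fin m => Sum.inr (Sum.inl a))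
          (fun a : Fin d => Sum.inr (Sum.inr a)) →
        Hww = (Hs i).submatrix (fun a : Fin d => Sum.inr (Sum.inr a))
          (fun a : Fin d => Sum.inr (Sum.inr a)) →
        Gu = (fun a : Fin m => Gs i (Sum.inr (Sum.inl a))) →
        Gw = (fun a : Fin d => Gs i (Sum.inr (Sum.inr a))) →
        Ks i = (Huu - Huw * Hww⁻¹ * Huwᵀ)⁻¹ * (Huw * Hww⁻¹ * Hxwᵀ - Hxuᵀ) ∧
        rs i = (-(1 : ℝ) / 2) • ((Huu - Huw * Hww⁻¹ * Huwᵀ)⁻¹ *ᵥ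
          (Gu - (Huw * Hww⁻¹) *ᵥ Gw)) ∧
        Ls i = (Hww - Huwᵀ * Huu⁻¹ * Huw)⁻¹ * (Huwᵀ * Huu⁻¹ * Hxuᵀ - Hxwᵀ) ∧
        ls i = (-(1 : ℝ) / 2) • ((Hww - Huwᵀ * Huu⁻¹ * Huw)⁻¹ *ᵥ
          (Gw - (Huwᵀ * Huu⁻¹) *ᵥ Gu)))
    -- definiteness along the value iteration
    (hpd : ∀ i,
      (lam • (1 : Matrix (Fin d) (Fin d) ℝ) - α • (Eᵀ * Pseq i * E)).PosDef) :
    ∀ i : ℕ,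
      Hs (i + 1) = fromBlocks (Q + α • (Aᵀ * Pseq i * A))
          (fromCols (α • (Aᵀ * Pseq i * B)) (α • (Aᵀ * Pseq i * E)))
          (fromRows (α • (Bᵀ * Pseq i * A)) (α • (Eᵀ * Pseq i * A)))
          (fromBlocks (R + α • (Bᵀ * Pseq i * B)) (α • (Bᵀ * Pseq i * E))
            (α • (Eᵀ * Pseq i * B))
            (α • (Eᵀ * Pseq i * E) - lam • (1 : Matrix (Fin d) (Fin d) ℝ))) ∧
      Gs (i + 1) = Sum.elim (α • (gseq i ᵥ* A))
          (Sum.elim (α • (gseq i ᵥ* B)) (α • (gseq i ᵥ* E) + (2 * lam) • wbar)) ∧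
      ss (i + 1) = α * zseq i - lam * (wbar ⬝ᵥ wbar) := by
  obtain ⟨hα0, hα1⟩ := hα
  subst hSig0
  subst hW
  subst hS
  subst hc
  have hVI := fun i => hVIrec i _ _ _ _ _ _ _ _ _ rfl rfl rfl rfl rfl rfl rfl rfl rfl
  have hPP : ∀ i, (Pseq i).PosSemidef ∧ (Pseq i)ᵀ = Pseq i := by
    intro i
    induction i with
    | zero => rw [hP0]; exact ⟨Matrix.PosSemidef.zero, Matrix.transpose_zero⟩
    | succ i ih =>
      rw [(hVI i).1]
      exact psd_step A B E Q R α lam (Pseq i) hα0 hQ hR ih.1 ih.2 (hpd i)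
  intro i
  induction i with
  | zero =>
    obtain ⟨h1, h2, h3⟩ := hQLrec 0 (fromRows 1 (fromRows (Ks 0) (Ls 0)))
      (Sum.elim 0 (Sum.elim (rs 0) (ls 0))) rfl rfl
    refine ⟨?_, ?_, ?_⟩
    · rw [h1, hH0, hP0]
      simp only [Matrix.mul_zero, Matrix.zero_mul, smul_zero, add_zero, zero_sub,
        fromCols_zero, fromRows_zero, neg_smul]
    · rw [h2, hG0, hH0, hg0]
      simp only [Matrix.vecMul_zero, smul_zero, zero_add, Matrix.zero_vecMul,
        smul_zero, add_zero]
    · rw [h3, hs0, hG0, hH0, hz0]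
      simp
  | succ i ih =>
    obtain ⟨ihH, ihG, ihs⟩ := ih
    obtain ⟨hpsd, hsymP⟩ := hPP i
    obtain ⟨hHuuPD, hu, hw, hinv, hdu, hdw⟩ :=
      units_step B E R α lam (Pseq i) hα0 hR hpsd (hpd i)
    have hMu := Mdet B E R α lam (Pseq i) hα0 hR hpsd (hpd i)
    have hMs := Msym B E R α lam (Pseq i) hpsd hsymP hR
    have hHwws : (α • (Eᵀ * Pseq i * E) - lam • (1 : Matrix (Fin d) (Fin d) ℝ))ᵀ =
        α • (Eᵀ * Pseq i * E) - lam • (1 : Matrix (Fin d) (Fin d) ℝ) := by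
      rw [transpose_sub, transpose_smul, transpose_smul, transpose_one, transpose_mul,
        transpose_mul, transpose_transpose, hsymP, ← Matrix.mul_assoc]
    have hHsFM : Hs (i + 1) =
        fromBlocks (Q + α • (Aᵀ * Pseq i * A))
          (fromCols (α • (Aᵀ * Pseq i * B)) (α • (Aᵀ * Pseq i * E)))
          (fromCols (α • (Aᵀ * Pseq i * B)) (α • (Aᵀ * Pseq i * E)))ᵀ
          (fromBlocks (R + α • (Bᵀ * Pseq i * B)) (α • (Bᵀ * Pseq i * E))
            (α • (Bᵀ * Pseq i * E))ᵀ
            (α • (Eᵀ * Pseq i * E) - lam • (1 : Matrix (Fin d) (Fin d) ℝ))) := by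
      rw [ihH]
      exact blockT_as_FM A B E Q R α lam (Pseq i) hsymP
    obtain ⟨hK, hr, hL, hl⟩ := hpol (i + 1) (Nat.le_add_left 1 i)
      (α • (Aᵀ * Pseq i * B)) (α • (Aᵀ * Pseq i * E))
      (R + α • (Bᵀ * Pseq i * B)) (α • (Bᵀ * Pseq i * E))
      (α • (Eᵀ * Pseq i * E) - lam • (1 : Matrix (Fin d) (Fin d) ℝ))
      (α • (Bᵀ *ᵥ gseq i))
      (α • (Eᵀ *ᵥ gseq i) + (2 * lam) • wbar)
      (by rw [ihH, ex_xu])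
      (by rw [ihH, ex_xw])
      (by rw [ihH, ex_uu])
      (by rw [ihH, ex_uw])
      (by rw [ihH, ex_ww])
      (by rw [ihG]; funext a; simp [mulVec_transpose])
      (by rw [ihG]; funext a; simp [mulVec_transpose])
    obtain ⟨h1, h2, h3⟩ := hQLrec (i + 1)
      (fromRows 1 (fromRows (Ks (i + 1)) (Ls (i + 1))))
      (Sum.elim 0 (Sum.elim (rs (i + 1)) (ls (i + 1)))) rfl rfl
    have hU : fromRows (Ks (i + 1)) (Ls (i + 1)) =
        -((fromBlocks (R + α • (Bᵀ * Pseq i * B)) (α • (Bᵀ * Pseq i * E))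
            (α • (Bᵀ * Pseq i * E))ᵀ
            (α • (Eᵀ * Pseq i * E) - lam • (1 : Matrix (Fin d) (Fin d) ℝ)))⁻¹ *
          (fromCols (α • (Aᵀ * Pseq i * B)) (α • (Aᵀ * Pseq i * E)))ᵀ) := by
      rw [hK, hL]
      exact Ulemma _ _ _ _ _ hu hw hdu hdw
    have hv : Sum.elim (rs (i + 1)) (ls (i + 1)) =
        (-(1:ℝ) / 2) • ((fromBlocks (R + α • (Bᵀ * Pseq i * B)) (α • (Bᵀ * Pseq i * E))
            (α • (Bᵀ * Pseq i * E))ᵀ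
            (α • (Eᵀ * Pseq i * E) - lam • (1 : Matrix (Fin d) (Fin d) ℝ)))⁻¹ *ᵥ
          Sum.elim (α • (Bᵀ *ᵥ gseq i)) (α • (Eᵀ *ᵥ gseq i) + (2 * lam) • wbar)) := by
      rw [hr, hl]
      exact vlemma _ _ _ _ _ hu hw hdu hdw
    have hGsum : Gs (i + 1) = Sum.elim (α • (Aᵀ *ᵥ gseq i))
        (Sum.elim (α • (Bᵀ *ᵥ gseq i)) (α • (Eᵀ *ᵥ gseq i) + (2 * lam) • wbar)) := by
      rw [ihG]
      ext (j | j | j) <;> simp [mulVec_transpose]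
    refine ⟨?_, ?_, ?_⟩
    · rw [h1, hHsFM]
      have key : (fromRows (1 : Matrix (Fin n) (Fin n) ℝ) (fromRows (Ks (i + 1)) (Ls (i + 1))) *
            fromCols A (fromCols B E))ᵀ *
            (fromBlocks (Q + α • (Aᵀ * Pseq i * A))
              (fromCols (α • (Aᵀ * Pseq i * B)) (α • (Aᵀ * Pseq i * E)))
              (fromCols (α • (Aᵀ * Pseq i * B)) (α • (Aᵀ * Pseq i * E)))ᵀ
              (fromBlocks (R + α • (Bᵀ * Pseq i * B)) (α • (Bᵀ * Pseq i * E))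
                (α • (Bᵀ * Pseq i * E))ᵀ
                (α • (Eᵀ * Pseq i * E) - lam • (1 : Matrix (Fin d) (Fin d) ℝ)))) *
            (fromRows (1 : Matrix (Fin n) (Fin n) ℝ) (fromRows (Ks (i + 1)) (Ls (i + 1))) *
              fromCols A (fromCols B E)) =
          (fromCols A (fromCols B E))ᵀ *
            ((fromCols (1 : Matrix (Fin n) (Fin n) ℝ) (fromRows (Ks (i + 1)) (Ls (i + 1)))ᵀ) *
              (fromBlocks (Q + α • (Aᵀ * Pseq i * A))
                (fromCols (α • (Aᵀ * Pseq i * B)) (α • (Aᵀ * Pseq i * E)))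
                (fromCols (α • (Aᵀ * Pseq i * B)) (α • (Aᵀ * Pseq i * E)))ᵀ
                (fromBlocks (R + α • (Bᵀ * Pseq i * B)) (α • (Bᵀ * Pseq i * E))
                  (α • (Bᵀ * Pseq i * E))ᵀ
                  (α • (Eᵀ * Pseq i * E) - lam • (1 : Matrix (Fin d) (Fin d) ℝ)))) *
              (fromRows (1 : Matrix (Fin n) (Fin n) ℝ) (fromRows (Ks (i + 1)) (Ls (i + 1))))) *
            fromCols A (fromCols B E) := by
        rw [transpose_mul, transpose_fromRows, transpose_one]
        simp only [Matrix.mul_assoc]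
      rw [key, THTlemma _ _ _ _ hMu hMs hU, ← (hVI i).1]
      exact WSPS A B E Q R α lam (Pseq (i + 1))
    · rw [h2, hGsum, hHsFM]
      rw [show (Sum.elim (0 : Fin n → ℝ) (Sum.elim (rs (i + 1)) (ls (i + 1)))) =
        Sum.elim (0 : Fin n → ℝ) (Sum.elim (rs (i + 1)) (ls (i + 1))) from rfl]
      rw [← Matrix.vecMul_vecMul]
      rw [Glemma _ _ _ _ _ _ _ hMu hMs hv, ← (hVI i).2.1]
      rw [vecMul_fromCols, vecMul_fromCols]
      ext (j | j | j) <;> simp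
    · rw [h3, ihs, hGsum, hHsFM, (hVI i).2.2]
      rw [add_assoc (α * zseq i - lam * (wbar ⬝ᵥ wbar))]
      rw [slemma _ _ _ _ _ _ hMu hMs hv]
      rw [qlemma _ _ _ _ _ hHwws hu hw hdu]
      rw [smul_zero, zero_add, Matrix.mul_smul, trace_smul, trace_mul_vecMulVec]
      simp only [smul_eq_mul]
      ring
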